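/- Let C₁, C₂ be linear codes over a finite field F with C₂ ⊆ C₁ ⊆ F^n, dim C₁ = k₁, dim C₂ = k₂. Then the symplectic dual of C = C₂ × C₁^⊥ is C^{⊥*} = C₁ × C₂^⊥, and dim C^{⊥*} − dim C = 2(k₁ − k₂). -/

import Mathlib

variable {F : Type*} [Field F] {n : ℕ}

/-- The symplectic form `(u|v) * (u'|v') = v·u' − v'·u` on `F^n × F^n`. -/
def sympForm (w w' : (Fin n → F) × (Fin n → F)) : F :=
  (∑ i, w.2 i * w'.1 i) - ∑ i, w'.2 i * w.1 i

/-- The dual of `C` with respect to the symplectic form. -/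
def sympDual (C : Submodule F ((Fin n → F) × (Fin n → F))) :
    Submodule F ((Fin n → F) × (Fin n → F)) where
  carrier := {w | ∀ w' ∈ C, sympForm w w' = 0}
  zero_mem' := by intro w' _; simp [sympForm]
  add_mem' := by
    intro a b ha hb w' hw'
    have h1 := ha w' hw'
    have h2 := hb w' hw'
    simp only [sympForm] at h1 h2 ⊢
    simp only [Prod.fst_add, Prod.snd_add, Pi.add_apply, add_mul, mul_add,
      Finset.sum_add_distrib]
    linear_combination h1 + h2
  smul_mem' := by
    intro c a ha w' hw'
    have h1 := ha w' hw'
    simp only [sympForm] at h1 ⊢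
    simp only [Prod.smul_fst, Prod.smul_snd, Pi.smul_apply, smul_eq_mul,
      mul_assoc, mul_left_comm, ← Finset.mul_sum]
    linear_combination c * h1

/-- The dual of a code with respect to the Euclidean inner product `u·v = Σ uᵢvᵢ`. -/
def euclDual (C : Submodule F (Fin n → F)) : Submodule F (Fin n → F) where
  carrier := {u | ∀ v ∈ C, ∑ i, u i * v i = 0}
  zero_mem' := by intro v _; simp
  add_mem' := by
    intro a b ha hb v hv
    have h1 := ha v hv
    have h2 := hb v hv
    simp only [Pi.add_apply, add_mul, Finset.sum_add_distrib]
    linear_combination h1 + h2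
  smul_mem' := by
    intro c a ha v hv
    have h1 := ha v hv
    simp only [Pi.smul_apply, smul_eq_mul, mul_assoc, ← Finset.mul_sum]
    linear_combination c * h1


section Aux

variable (F n) in
/-- The dot product bilinear form on `Fin n → F`. -/
noncomputable def dotB : LinearMap.BilinForm F (Fin n → F) :=
  LinearMap.mk₂ F (fun u v => ∑ i, u i * v i)
    (by intro a b v; simp [add_mul, Finset.sum_add_distrib])
    (by intro c a v; simp [Finset.mul_sum, mul_assoc])
    (by intro a b v; simp [mul_add, Finset.sum_add_distrib])
    (by intro c a v; simp only [smul_eq_mul, Pi.smul_apply, Finset.mul_sum]; exact Finset.sum_congr rfl fun i _ => by ring)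

lemma dotB_apply (u v : Fin n → F) : dotB F n u v = ∑ i, u i * v i := rfl

lemma dotB_symm : (dotB F n).IsSymm := by
  constructor
  intro u v
  simp only [dotB_apply, RingHom.id_apply]
  exact Finset.sum_congr rfl fun i _ => mul_comm _ _

lemma dotB_nondeg : (dotB F n).Nondegenerate := by
  refine (LinearMap.IsRefl.nondegenerate_iff_separatingLeft (B := dotB F n) dotB_symm.isRefl).mpr ?_
  intro u hu
  funext i
  have := hu (Pi.single i 1)
  simpa [dotB_apply, Pi.single_apply, Finset.mul_sum, mul_ite] using this

lemma euclDual_eq_orthogonal (C : Submodule F (Fin n → F)) :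
    euclDual C = (dotB F n).orthogonal C := by
  ext u
  have key : ∀ v : Fin n → F, (dotB F n v u = 0) ↔ ∑ i, u i * v i = 0 := by
    intro v
    rw [show (dotB F n) v u = dotB F n u v from dotB_symm.eq v u, dotB_apply]
  constructor
  · intro hu v hv
    exact (key v).mpr (hu v hv)
  · intro hu v hv
    exact (key v).mp (hu v hv)

lemma finrank_euclDual (C : Submodule F (Fin n → F)) :
    Module.finrank F (euclDual C) = n - Module.finrank F C := by
  rw [euclDual_eq_orthogonal,
    LinearMap.BilinForm.finrank_orthogonal dotB_nondeg C,
    Module.finrank_pi]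
  simp

lemma euclDual_euclDual (C : Submodule F (Fin n → F)) :
    euclDual (euclDual C) = C := by
  rw [euclDual_eq_orthogonal, euclDual_eq_orthogonal]
  exact LinearMap.BilinForm.orthogonal_orthogonal dotB_nondeg dotB_symm.isRefl C

/-- A submodule prod is equivalent to the product of the submodules. -/
noncomputable def prodEquivAux {M N : Type*} [AddCommGroup M] [AddCommGroup N]
    [Module F M] [Module F N] (p : Submodule F M) (q : Submodule F N) :
    (p.prod q : Submodule F (M × N)) ≃ₗ[F] p × q where
  toFun x := (⟨x.1.1, x.2.1⟩, ⟨x.1.2, x.2.2⟩)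
  map_add' _ _ := rfl
  map_smul' _ _ := rfl
  invFun y := ⟨(y.1.1, y.2.1), y.1.2, y.2.2⟩
  left_inv _ := rfl
  right_inv _ := rfl

lemma finrank_submodule_prod {M N : Type*} [AddCommGroup M] [AddCommGroup N]
    [Module F M] [Module F N] [FiniteDimensional F M] [FiniteDimensional F N]
    (p : Submodule F M) (q : Submodule F N) :
    Module.finrank F (p.prod q) = Module.finrank F p + Module.finrank F q := by
  rw [LinearEquiv.finrank_eq (prodEquivAux p q), Module.finrank_prod]

end Aux

/-- The symplectic dual of `C = C₂ × C₁^⊥` is `C₁ × C₂^⊥`, and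
`dim C^{⊥*} − dim C = 2(k₁ − k₂)`. -/
theorem css_sympDual_eq [Fintype F] (C₁ C₂ : Submodule F (Fin n → F))
    (h : C₂ ≤ C₁) (k₁ k₂ : ℕ) (hk₁ : Module.finrank F C₁ = k₁)
    (hk₂ : Module.finrank F C₂ = k₂) :
    sympDual (C₂.prod (euclDual C₁)) = C₁.prod (euclDual C₂) ∧
      Module.finrank F (sympDual (C₂.prod (euclDual C₁))) -
          Module.finrank F (C₂.prod (euclDual C₁)) = 2 * (k₁ - k₂) := by
  have hdual : sympDual (C₂.prod (euclDual C₁)) = C₁.prod (euclDual C₂) := by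
    ext w
    constructor
    · intro hw
      constructor
      · -- w.1 ∈ C₁
        rw [← euclDual_euclDual C₁]
        intro b hb
        have := hw (0, b) ⟨C₂.zero_mem, hb⟩
        simp only [sympForm, Pi.zero_apply, mul_zero, Finset.sum_const_zero, zero_sub,
          neg_eq_zero] at this
        calc ∑ i, w.1 i * b i = ∑ i, b i * w.1 i :=
              Finset.sum_congr rfl fun i _ => mul_comm _ _
          _ = 0 := this
      · -- w.2 ∈ euclDual C₂
        intro v hv
        have := hw (v, 0) ⟨hv, (euclDual C₁).zero_mem⟩
        simpa [sympForm] using this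
    · rintro ⟨h1, h2⟩ ⟨a, b⟩ ⟨ha, hb⟩
      have e1 : ∑ i, w.2 i * a i = 0 := h2 a ha
      have e2 : ∑ i, b i * w.1 i = 0 := hb w.1 h1
      simp only [sympForm]
      rw [e1, e2, sub_zero]
  refine ⟨hdual, ?_⟩
  rw [hdual, finrank_submodule_prod, finrank_submodule_prod,
    finrank_euclDual, finrank_euclDual, hk₁, hk₂]
  have hle : k₂ ≤ k₁ := by
    rw [← hk₁, ← hk₂]; exact Submodule.finrank_mono h
  have hn : k₁ ≤ n := by
    rw [← hk₁]
    simpa using (Submodule.finrank_le C₁).trans_eq (by simp)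
  omega
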